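/- Let F ∈ B(A) have closed image. Then F is upper semi-Fredholm with respect to the ideal F of finite type elements if and only if the orthogonal projection onto ker F belongs to F. -/

import Mathlib

variable {A : Type*}

/-- An orthogonal projection in a C*-algebra. -/
def IsProjectionElem [CStarAlgebra A] (p : A) : Prop := IsSelfAdjoint p ∧ p * p = p

/-- Murray–von Neumann equivalence of projections: `p ∼ q`. -/
def MvNEquiv [CStarAlgebra A] (p q : A) : Prop := ∃ v : A, v * star v = p ∧ star v * v = q

/-- Murray–von Neumann subequivalence `p ⪯ q`: `p` is equivalent to a
subprojection of `q`. -/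
def MvNSubEquiv [CStarAlgebra A] (p q : A) : Prop :=
  ∃ p' : A, IsProjectionElem p' ∧ p' * q = p' ∧ q * p' = p' ∧ MvNEquiv p p'

/-- `a` is invertible up to the pair of projections `(p, q)`. -/
def InvertibleUpTo [CStarAlgebra A] (a p q : A) : Prop :=
  ∃ b : A, (1 - q) * a * (1 - p) * b = 1 - q ∧ b * ((1 - q) * a * (1 - p)) = 1 - p

/-- An ideal of finite type elements in a unital C*-algebra `A`
(Kečkić–Lazović): a selfadjoint (two-sided, complex-linear) ideal possessing an
approximate unit of projections, and such that for any two projections `p, q`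
in the ideal there is `v` with `v v* = q` and `v* v ⊥ p`. -/
structure FiniteTypeIdeal (A : Type*) [CStarAlgebra A] where
  carrier : Set A
  zero_mem : (0 : A) ∈ carrier
  add_mem : ∀ {a b : A}, a ∈ carrier → b ∈ carrier → a + b ∈ carrier
  smul_mem : ∀ (c : ℂ) {a : A}, a ∈ carrier → c • a ∈ carrier
  mul_mem_left : ∀ (a : A) {b : A}, b ∈ carrier → a * b ∈ carrier
  mul_mem_right : ∀ (a : A) {b : A}, b ∈ carrier → b * a ∈ carrier
  star_mem : ∀ {a : A}, a ∈ carrier → star a ∈ carrier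
  approx_unit : ∀ {a : A}, a ∈ carrier → ∀ ε : ℝ, 0 < ε →
    ∃ p ∈ carrier, IsProjectionElem p ∧ ‖a * p - a‖ < ε ∧ ‖p * a - a‖ < ε
  exchange : ∀ {p q : A}, p ∈ carrier → q ∈ carrier →
    IsProjectionElem p → IsProjectionElem q →
    ∃ v : A, v * star v = q ∧ IsProjectionElem (star v * v + p)

variable [CStarAlgebra A]

/-- Upper semi-Fredholm type elements `KΦ₊(A)`. -/
def UpperSemiFredholm (F : FiniteTypeIdeal A) (a : A) : Prop :=
  ∃ p q : A, IsProjectionElem p ∧ IsProjectionElem q ∧ p ∈ F.carrier ∧ InvertibleUpTo a p q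

/-- Lower semi-Fredholm type elements `KΦ₋(A)`. -/
def LowerSemiFredholm (F : FiniteTypeIdeal A) (a : A) : Prop :=
  ∃ p q : A, IsProjectionElem p ∧ IsProjectionElem q ∧ q ∈ F.carrier ∧ InvertibleUpTo a p q

/-- Fredholm type elements `KΦ(A)`. -/
def FredholmType (F : FiniteTypeIdeal A) (a : A) : Prop :=
  ∃ p q : A, IsProjectionElem p ∧ IsProjectionElem q ∧ p ∈ F.carrier ∧ q ∈ F.carrier ∧
    InvertibleUpTo a p q

/-- Upper semi-Weyl type elements `KΦ₊⁻(A)`. -/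
def UpperSemiWeyl (F : FiniteTypeIdeal A) (a : A) : Prop :=
  ∃ p q : A, IsProjectionElem p ∧ IsProjectionElem q ∧ p ∈ F.carrier ∧ MvNSubEquiv p q ∧
    InvertibleUpTo a p q

/-- Lower semi-Weyl type elements `KΦ₋⁺(A)`. -/
def LowerSemiWeyl (F : FiniteTypeIdeal A) (a : A) : Prop :=
  ∃ p q : A, IsProjectionElem p ∧ IsProjectionElem q ∧ q ∈ F.carrier ∧ MvNSubEquiv q p ∧
    InvertibleUpTo a p q

/-- Weyl type elements `KΦ₀(A)`. -/
def WeylType (F : FiniteTypeIdeal A) (a : A) : Prop :=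
  ∃ p q : A, IsProjectionElem p ∧ IsProjectionElem q ∧ p ∈ F.carrier ∧ q ∈ F.carrier ∧
    MvNEquiv p q ∧ InvertibleUpTo a p q

/-- The orthogonal complement of a subset of `A`, viewed as a Hilbert
`A`-module over itself with inner product `⟪x, y⟫ = x* y`. -/
def OrthoComplement (S : Set A) : Set A := {x : A | ∀ n ∈ S, star n * x = 0}

/-- A subset (submodule) of `A` is orthogonally complementable if every element
of `A` decomposes as a sum of an element of `S` and an element of `S^⊥`. -/
def IsOrthoComplementable (S : Set A) : Prop :=
  ∀ x : A, ∃ n ∈ S, ∃ m ∈ OrthoComplement S, x = n + m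

/-- A closed submodule `N` of `A` is (topologically) complementable if there is
a closed submodule `L` with `N ⊓ L = 0` and `N + L = A`. -/
def IsComplementable (N : Submodule Aᵐᵒᵖ A) : Prop :=
  ∃ L : Submodule Aᵐᵒᵖ A, IsClosed (L : Set A) ∧ N ⊓ L = ⊥ ∧ N ⊔ L = ⊤

/-- An orthogonal projection in `B(A)`: an idempotent which is self-adjoint
with respect to the `A`-valued inner product. -/
def IsOrthogonalProjectionOp (P : A →L[Aᵐᵒᵖ] A) : Prop :=
  P * P = P ∧ ∀ x y : A, star (P x) * y = star x * P y

/-- Invertibility of `F ∈ B(A)` up to a pair of projections `(P, Q)`. -/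
def OpInvertibleUpTo (F P Q : A →L[Aᵐᵒᵖ] A) : Prop :=
  ∃ D : A →L[Aᵐᵒᵖ] A,
    (1 - Q) * F * (1 - P) * D = 1 - Q ∧ D * ((1 - Q) * F * (1 - P)) = 1 - P

/-- Lemma `closed` (a): if `F ∈ B(A)` (here realized as left multiplication by
`a ∈ A`) has closed image, then `F` is upper semi-Fredholm with respect to the
ideal `F` of finite type elements iff the orthogonal projection onto `ker F`
belongs to the ideal. -/
theorem upperSemiFredholm_iff_ker_projection_finite (F : FiniteTypeIdeal A) (a p : A)
    (hclosed : IsClosed {x : A | ∃ y : A, a * y = x})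
    (hp : IsProjectionElem p)
    (hker : {x : A | p * x = x} = {x : A | a * x = 0}) :
    UpperSemiFredholm F a ↔ p ∈ F.carrier := by
  have hsp : star p = p := hp.1
  have hp2 : p * p = p := hp.2
  have hap : a * p = 0 := by
    have hmem : p ∈ {x : A | p * x = x} := hp2
    rwa [hker] at hmem
  have hpker : ∀ x : A, a * x = 0 → p * x = x := by
    intro x hx
    have : x ∈ {x : A | a * x = 0} := hx
    rwa [← hker] at this
  have hpsa : p * star a = 0 := by
    have h1 : star (a * p) = p * star a := by rw [star_mul, hsp]
    rw [hap, star_zero] at h1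
    exact h1.symm
  constructor
  · rintro ⟨p', q, _, _, hp'F, b, _, h2⟩
    set t := b * ((1 - q) * a) with ht
    have h2' : t * (1 - p') = 1 - p' := by rw [ht, mul_assoc]; exact h2
    have hthis : t - t * p' = 1 - p' := by rw [← h2', mul_sub, mul_one]
    have htp' : t * p' = t - (1 - p') := by rw [← hthis]; abel
    have heq : ((1:A) - t) * p' = 1 - t := by rw [sub_mul, one_mul, htp']; abel
    have hmem1 : (1:A) - t ∈ F.carrier := heq ▸ F.mul_mem_left _ hp'F
    have htp : t * p = 0 := by
      simp only [ht, mul_assoc, hap, mul_zero]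
    have hfin : p = ((1:A) - t) * p := by rw [sub_mul, one_mul, htp, sub_zero]
    rw [hfin]
    exact F.mul_mem_right p hmem1
  · intro hpF
    rcases subsingleton_or_nontrivial A with hs | hnt
    · exact ⟨0, 0, ⟨by simp [IsSelfAdjoint], by simp⟩, ⟨by simp [IsSelfAdjoint], by simp⟩,
        F.zero_mem, 0, Subsingleton.elim _ _, Subsingleton.elim _ _⟩
    -- Banach open mapping bound
    set T : A →L[ℂ] A := ContinuousLinearMap.mul ℂ A a with hT
    set S : Submodule ℂ A := LinearMap.range (T : A →ₗ[ℂ] A) with hS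
    have hSset : (S : Set A) = {x : A | ∃ y : A, a * y = x} := by
      ext z
      constructor
      · rintro ⟨y, rfl⟩; exact ⟨y, rfl⟩
      · rintro ⟨y, rfl⟩; exact ⟨y, rfl⟩
    haveI : CompleteSpace S := (hSset ▸ hclosed).completeSpace_coe
    set T' : A →L[ℂ] S := T.codRestrict S (fun x => LinearMap.mem_range_self _ x) with hT'
    have hsurj : Function.Surjective T' := by
      rintro ⟨z, hz⟩
      obtain ⟨y, hy⟩ := hz
      exact ⟨y, Subtype.ext hy⟩
    obtain ⟨C, hC0, hC⟩ := ContinuousLinearMap.exists_preimage_norm_le T' hsurj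
    set k : ℝ := C * (1 + ‖p‖) with hk
    have hk0 : 0 < k := by positivity
    have hbound : ∀ x : A, ‖x - p * x‖ ≤ k * ‖a * x‖ := by
      intro x
      have hmem : a * x ∈ S := ⟨x, rfl⟩
      obtain ⟨y, hy, hny⟩ := hC ⟨a * x, hmem⟩
      have hay : a * y = a * x := congrArg Subtype.val hy
      have h0 : a * (x - y) = 0 := by rw [mul_sub, hay, sub_self]
      have hpxy : p * (x - y) = x - y := hpker _ h0
      rw [mul_sub] at hpxy
      have hpx : p * x = x - y + p * y := by rw [← hpxy]; abel
      have hxy : x - p * x = y - p * y := by rw [hpx]; abel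
      have hnz : ‖(⟨a * x, hmem⟩ : S)‖ = ‖a * x‖ := rfl
      calc ‖x - p * x‖ = ‖y - p * y‖ := by rw [hxy]
        _ ≤ ‖y‖ + ‖p * y‖ := norm_sub_le _ _
        _ ≤ ‖y‖ + ‖p‖ * ‖y‖ := by
            have := norm_mul_le p y
            linarith
        _ = (1 + ‖p‖) * ‖y‖ := by ring
        _ ≤ (1 + ‖p‖) * (C * ‖a * x‖) := by
            have h1 : ‖y‖ ≤ C * ‖a * x‖ := by rw [← hnz]; exact hny
            have h2 : (0:ℝ) ≤ 1 + ‖p‖ := by positivity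
            exact mul_le_mul_of_nonneg_left h1 h2
        _ = k * ‖a * x‖ := by rw [hk]; ring
    -- the element d = a*a + p
    set d : A := star a * a + p with hd
    have hdp : d * p = p := by rw [hd, add_mul, hp2, mul_assoc, hap, mul_zero, zero_add]
    have hpd : p * d = p := by rw [hd, mul_add, hp2, ← mul_assoc, hpsa, zero_mul, zero_add]
    have hdsa : IsSelfAdjoint d := by
      rw [hd]
      simp only [IsSelfAdjoint, star_add, star_mul, star_star, hsp]
    have hdu : IsUnit d := by
      by_contra h0
      have h0' : (0:ℝ) ∈ spectrum ℝ d := (spectrum.zero_mem_iff ℝ).mpr h0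
      set δ : ℝ := min (1/2) (1/(2*k^2)) with hδ
      have hδ0 : 0 < δ := lt_min (by norm_num) (by positivity)
      have hδ1 : δ < 1 := lt_of_le_of_lt (min_le_left _ _) (by norm_num)
      have hδk : δ ≤ 1/(2*k^2) := min_le_right _ _
      set f : ℝ → ℝ := fun t => max 0 (1 - |t|/δ) with hf
      have hfc : Continuous f := by rw [hf]; fun_prop
      have hf0 : f 0 = 1 := by simp [hf]
      have hfle : ∀ t : ℝ, 0 ≤ f t ∧ f t ≤ 1 := by
        intro t
        refine ⟨le_max_left _ _, max_le (by norm_num) ?_⟩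
        have : 0 ≤ |t|/δ := by positivity
        linarith
      have hfz : ∀ t : ℝ, δ ≤ |t| → f t = 0 := by
        intro t htd
        have h1 : 1 - |t|/δ ≤ 0 := by
          rw [sub_nonpos, le_div_iff₀ hδ0]
          linarith
        exact max_eq_left h1
      set x := cfc f d with hx
      have hxsa : IsSelfAdjoint x := cfc_predicate f d
      have hfn : ∀ n : ℕ, x * p = cfc (fun t => f t * t^n) d * p := by
        intro n
        induction n with
        | zero => simp only [pow_zero, mul_one, hx]
        | succ n ih =>
          have hmul : cfc (fun t : ℝ => f t * t^(n+1)) d = cfc (fun t => f t * t^n) d * d := by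
            have h1 := cfc_mul (fun t => f t * t^n) (fun t : ℝ => t) d
              ((hfc.mul (continuous_pow n)).continuousOn) (continuous_id.continuousOn)
            rw [cfc_id' ℝ d] at h1
            rw [← h1]
            exact cfc_congr (fun t _ => by ring)
          rw [hmul, mul_assoc, hdp]
          exact ih
      have hnormfn : ∀ n : ℕ, ‖cfc (fun t => f t * t^n) d‖ ≤ δ^n := by
        intro n
        refine norm_cfc_le (by positivity) ?_
        intro t ht
        rcases le_or_gt δ |t| with h | h
        · simp only [hfz t h, zero_mul, norm_zero]
          positivity
        · have h1 := hfle t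
          rw [Real.norm_eq_abs, abs_mul, abs_of_nonneg h1.1, abs_pow]
          calc f t * |t|^n ≤ 1 * δ^n :=
                mul_le_mul h1.2 (pow_le_pow_left₀ (abs_nonneg t) h.le n) (by positivity) (by norm_num)
            _ = δ^n := one_mul _
      have hxp0 : x * p = 0 := by
        have hb : ∀ n : ℕ, ‖x * p‖ ≤ δ^n * ‖p‖ := by
          intro n
          rw [hfn n]
          calc ‖cfc (fun t => f t * t^n) d * p‖
              ≤ ‖cfc (fun t => f t * t^n) d‖ * ‖p‖ := norm_mul_le _ _
            _ ≤ δ^n * ‖p‖ := mul_le_mul_of_nonneg_right (hnormfn n) (norm_nonneg p)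
        have hlim : Filter.Tendsto (fun n : ℕ => δ^n * ‖p‖) Filter.atTop (nhds 0) := by
          have h1 : Filter.Tendsto (fun n : ℕ => δ^n) Filter.atTop (nhds 0) :=
            tendsto_pow_atTop_nhds_zero_of_lt_one hδ0.le hδ1
          simpa using h1.mul_const ‖p‖
        have hle : ‖x * p‖ ≤ 0 := ge_of_tendsto' hlim hb
        exact norm_le_zero_iff.mp hle
      have hpx0 : p * x = 0 := by
        have h1 := congrArg star hxp0
        rwa [star_mul, hxsa.star_eq, hsp, star_zero] at h1
      have hx1 : (1:ℝ) ≤ ‖x‖ := by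
        have h1 := norm_apply_le_norm_cfc f d h0' hfc.continuousOn hdsa
        rwa [hf0, norm_one, ← hx] at h1
      have hxdx : ‖x * d * x‖ ≤ δ := by
        have h2 := cfc_mul f (fun t : ℝ => t) d hfc.continuousOn continuous_id.continuousOn
        rw [cfc_id' ℝ d] at h2
        have h3 := cfc_mul (fun t => f t * t) f d
          (hfc.mul continuous_id).continuousOn hfc.continuousOn
        have h1 : x * d * x = cfc (fun t => f t * t * f t) d := by
          calc x * d * x = cfc (fun t => f t * t) d * cfc f d := by rw [hx, ← h2]
            _ = cfc (fun t => f t * t * f t) d := h3.symm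
        rw [h1]
        refine norm_cfc_le hδ0.le ?_
        intro t ht
        rcases le_or_gt δ |t| with h | h
        · simp only [hfz t h, zero_mul, mul_zero, norm_zero]
          exact hδ0.le
        · have h1 := hfle t
          rw [Real.norm_eq_abs, abs_mul, abs_mul, abs_of_nonneg h1.1]
          have hmm : f t * |t| * f t ≤ 1 * δ * 1 :=
            mul_le_mul (mul_le_mul h1.2 h.le (abs_nonneg t) (by norm_num)) h1.2 h1.1 (by positivity)
          linarith
      have haxsq : ‖a * x‖ * ‖a * x‖ ≤ δ := by
        have e : x * d * x = star (a * x) * (a * x) := by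
          rw [hd, star_mul, hxsa.star_eq]
          simp only [mul_add, add_mul, mul_assoc]
          rw [hpx0, mul_zero, add_zero]
        have h2 : ‖star (a * x) * (a * x)‖ = ‖a * x‖ * ‖a * x‖ := CStarRing.norm_star_mul_self
        rw [← h2, ← e]
        exact hxdx
      have hb := hbound x
      rw [hpx0, sub_zero] at hb
      have h1k : (1:ℝ) ≤ k * ‖a * x‖ := le_trans hx1 hb
      have hkk : (0:ℝ) < k * k := mul_pos hk0 hk0
      have hsq : (1:ℝ) ≤ (k * ‖a * x‖) * (k * ‖a * x‖) := by
        have h4 := mul_le_mul h1k h1k (by norm_num) (le_trans zero_le_one h1k)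
        linarith
      have hA : k * k * (‖a * x‖ * ‖a * x‖) ≤ k * k * δ := mul_le_mul_of_nonneg_left haxsq hkk.le
      have hkne : k ≠ 0 := hk0.ne'
      have hB : k * k * δ ≤ 1/2 := by
        have h5 : k * k * δ ≤ k * k * (1/(2*k^2)) := mul_le_mul_of_nonneg_left hδk hkk.le
        have h6 : k * k * (1/(2*k^2)) = 1/2 := by
          field_simp
        linarith
      have hE : (k * ‖a * x‖) * (k * ‖a * x‖) = k * k * (‖a * x‖ * ‖a * x‖) := by ring
      linarith
    -- construct the data
    obtain ⟨u, hu⟩ := hdu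
    set e : A := ↑u⁻¹ with he
    have hed : e * d = 1 := by rw [he, ← hu]; exact Units.inv_mul u
    have hde : d * e = 1 := by rw [he, ← hu]; exact Units.mul_inv u
    have hesa : star e = e := by
      have h1 := congrArg star hde
      rw [star_mul, star_one, hdsa.star_eq] at h1
      calc star e = star e * (d * e) := by rw [hde, mul_one]
        _ = star e * d * e := by rw [mul_assoc]
        _ = e := by rw [h1, one_mul]
    have hep : e * p = p := by
      calc e * p = e * (d * p) := by rw [hdp]
        _ = e * d * p := by rw [mul_assoc]
        _ = p := by rw [hed, one_mul]
    have hpe : p * e = p := by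
      calc p * e = p * d * e := by rw [hpd]
        _ = p * (d * e) := by rw [mul_assoc]
        _ = p := by rw [hde, mul_one]
    have hsaa : star a * a = d - p := by rw [hd, add_sub_cancel_right]
    have hkey1 : e * (star a * a) = 1 - p := by rw [hsaa, mul_sub, hed, hep]
    have hkey2 : (star a * a) * e = 1 - p := by rw [hsaa, sub_mul, hde, hpe]
    have step : (e * star a) * (a * (e * star a)) = e * star a := by
      calc (e * star a) * (a * (e * star a)) = e * ((star a * a * e) * star a) := by
            simp only [mul_assoc]
        _ = e * ((1 - p) * star a) := by rw [hkey2]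
        _ = e * star a := by rw [sub_mul, one_mul, hpsa, sub_zero]
    have hrr : (a * (e * star a)) * (a * (e * star a)) = a * (e * star a) := by
      rw [mul_assoc, step]
    have hrsa : star (a * (e * star a)) = a * (e * star a) := by
      simp only [star_mul, star_star, hesa]
      simp only [mul_assoc]
    have h1q : (1:A) - (1 - a * (e * star a)) = a * (e * star a) := by rw [sub_sub_cancel]
    have h1p : a * ((1:A) - p) = a := by rw [mul_sub, mul_one, hap, sub_zero]
    refine ⟨p, 1 - a * (e * star a), hp, ⟨?_, ?_⟩, hpF, e * star a, ?_, ?_⟩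
    · simp only [IsSelfAdjoint, star_sub, star_one, hrsa]
    · have hq2 : ((1:A) - a * (e * star a)) * (1 - a * (e * star a))
          = 1 - a * (e * star a) - (a * (e * star a) - a * (e * star a)) := by
        rw [sub_mul, one_mul, mul_sub, mul_one, hrr]
      rw [hq2, sub_self, sub_zero]
    · rw [h1q, mul_assoc (a * (e * star a)) a ((1:A) - p), h1p,
        mul_assoc (a * (e * star a)) a (e * star a)]
      exact hrr
    · rw [h1q, mul_assoc (a * (e * star a)) a ((1:A) - p), h1p]
      calc (e * star a) * (a * (e * star a) * a)
          = (e * (star a * a)) * (e * (star a * a)) := by simp only [mul_assoc]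
        _ = (1 - p) * (1 - p) := by rw [hkey1]
        _ = 1 - p := by rw [sub_mul, one_mul, mul_sub, mul_one, hp2, sub_self, sub_zero]
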